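/- For affine games G and H: if G > 0 and H ≥ 0, then G + H > 0. -/

import Mathlib

inductive AGame : Type
  | inf : AGame
  | binf : AGame
  | node : List AGame → List AGame → AGame

namespace AGame

/-- The affine games: option sets are nonempty (hereditarily). -/
inductive Valid : AGame → Prop
  | inf : Valid .inf
  | binf : Valid .binf
  | node : ∀ {L R : List AGame}, L ≠ [] → R ≠ [] →
      (∀ g ∈ L, Valid g) → (∀ g ∈ R, Valid g) → Valid (.node L R)

/-- Total version of the disjunctive sum (value on the undefined cases `∞ + ∞̄` is junk). -/
def add' : AGame → AGame → AGame
  | .inf, _ => .inf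
  | _, .inf => .inf
  | .binf, _ => .binf
  | _, .binf => .binf
  | .node L R, .node L' R' =>
      .node ((L.attach.map fun x => add' x.1 (.node L' R')) ++
             (L'.attach.map fun y => add' (.node L R) y.1))
            ((R.attach.map fun x => add' x.1 (.node L' R')) ++
             (R'.attach.map fun y => add' (.node L R) y.1))
termination_by G H => sizeOf G + sizeOf H
decreasing_by
  all_goals
    simp_wf
    first
      | (have := List.sizeOf_lt_of_mem x.2; simp_all; omega)
      | (have := List.sizeOf_lt_of_mem y.2; simp_all; omega)

/-- The disjunctive sum, undefined (`none`) exactly when adding `∞` to `∞̄`. -/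
def add : AGame → AGame → Option AGame
  | .inf, .binf => none
  | .binf, .inf => none
  | G, H => some (add' G H)

mutual
/-- `o^L(G) = L` : Left, playing first, wins `G`. -/
def lf : AGame → Bool
  | .inf => true
  | .binf => false
  | .node L _ => L.attach.any fun x => ls x.1
termination_by G => sizeOf G
decreasing_by
  simp_wf; have := List.sizeOf_lt_of_mem x.2; simp_all; omega
/-- `o^R(G) = L` : Left, playing second, wins `G`. -/
def ls : AGame → Bool
  | .inf => true
  | .binf => false
  | .node _ R => R.attach.all fun x => lf x.1
termination_by G => sizeOf G
decreasing_by
  simp_wf; have := List.sizeOf_lt_of_mem x.2; simp_all; omega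
end

/-- The combined outcome `(o^L(G), o^R(G))`, encoded as a pair of booleans
(`true` = Left wins). `(true,true)` is 𝓛, `(true,false)` is 𝓝, `(false,true)` is 𝓟,
`(false,false)` is 𝓡. -/
def outcome (G : AGame) : Bool × Bool := (lf G, ls G)

/-- The partial order of outcomes (componentwise, 𝓛 maximal, 𝓡 minimal, 𝓝 ∥ 𝓟). -/
def OutLE (a b : Bool × Bool) : Prop :=
  (a.1 = true → b.1 = true) ∧ (a.2 = true → b.2 = true)

/-- `G ≥ H` : replacing `H` by `G` never hurts Left in any disjunctive sum. -/
def GE (G H : AGame) : Prop :=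
  ∀ X : AGame, Valid X → X ≠ .inf → X ≠ .binf →
    OutLE (outcome (add' H X)) (outcome (add' G X))

/-- Game equivalence. -/
def Equiv (G H : AGame) : Prop :=
  ∀ X : AGame, Valid X → X ≠ .inf → X ≠ .binf →
    outcome (add' G X) = outcome (add' H X)

/-- The zero game `{∞̄ | ∞}`. -/
def zero : AGame := .node [.binf] [.inf]

/-- The conjugate (players switch roles). -/
def neg : AGame → AGame
  | .inf => .binf
  | .binf => .inf
  | .node L R =>
      .node (R.attach.map fun x => neg x.1) (L.attach.map fun x => neg x.1)
termination_by G => sizeOf G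
decreasing_by
  all_goals
    simp_wf
    (have := List.sizeOf_lt_of_mem x.2; simp_all; omega)


/-- Left option set (empty list for the terminating games). -/
def leftOptions : AGame → List AGame
  | .node L _ => L
  | _ => []

/-- Right option set (empty list for the terminating games). -/
def rightOptions : AGame → List AGame
  | .node _ R => R
  | _ => []

/-- A check: a game having `∞` as a Left option or `∞̄` as a Right option. -/
def IsCheck : AGame → Prop
  | .node L R => .inf ∈ L ∨ .binf ∈ R
  | _ => False

/-- `Follower H G` : `H` is a follower of `G` (i.e. `G` itself, an option of `G`,
an option of an option, and so on). -/
inductive Follower : AGame → AGame → Prop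
  | refl (G : AGame) : Follower G G
  | left {H K : AGame} {L R : List AGame} : K ∈ L → Follower H K → Follower H (.node L R)
  | right {H K : AGame} {L R : List AGame} : K ∈ R → Follower H K → Follower H (.node L R)

/-- A Conway form: distinct from `∞` and `∞̄`, with no checks among its followers. -/
def ConwayForm (G : AGame) : Prop :=
  G ≠ .inf ∧ G ≠ .binf ∧ ∀ H, Follower H G → ¬ IsCheck H

/-- A Conway game: a game equivalent to some Conway form. -/
def ConwayGame (G : AGame) : Prop :=
  ∃ G', Valid G' ∧ ConwayForm G' ∧ Equiv G G'

/-- `J` is invertible: `J + K = 0` (in the sense of game equivalence) for some affine `K`. -/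
def Invertible (J : AGame) : Prop :=
  ∃ K, Valid K ∧ ∃ S, add J K = some S ∧ Equiv S zero

/-- Number forms: the images of the surreal-number Conway forms under the embedding
that replaces an empty option set by `{∞̄}` on the Left and by `{∞}` on the Right.
Every genuine Left option is strictly less than every genuine Right option, and
all genuine options are again number forms. -/
inductive NumForm : AGame → Prop
  | mk {L R : List AGame}
      (hL0 : L ≠ []) (hR0 : R ≠ [])
      (hLb : .binf ∈ L → L = [.binf]) (hRi : .inf ∈ R → R = [.inf])
      (hLnum : ∀ x ∈ L, x ≠ .binf → NumForm x)
      (hRnum : ∀ y ∈ R, y ≠ .inf → NumForm y)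
      (hlt : ∀ x ∈ L, ∀ y ∈ R, x ≠ .binf → y ≠ .inf → GE y x ∧ ¬ GE x y) :
      NumForm (.node L R)

/-- A number: an affine game equal to (the image of) a Conway number form. -/
def IsNumber (G : AGame) : Prop := ∃ n, Valid n ∧ NumForm n ∧ Equiv G n

/-- The pathetic tiny `⧾∞ = {0 | {0 | ∞̄}}`. -/
def tinyInf : AGame := .node [zero] [.node [zero] [.binf]]

/-- The pathetic miny `⧿∞ = {{∞ | 0} | 0}`. -/
def minyInf : AGame := .node [.node [.inf] [zero]] [zero]


lemma lf_inf : lf .inf = true := by rw [lf]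
lemma lf_binf : lf .binf = false := by rw [lf]
lemma ls_inf : ls .inf = true := by rw [ls]
lemma ls_binf : ls .binf = false := by rw [ls]
lemma lf_node (L R : List AGame) : lf (.node L R) = L.any ls := by
  rw [lf]; simp [List.any_eq]
lemma ls_node (L R : List AGame) : ls (.node L R) = R.all lf := by
  rw [ls]; simp [List.all_eq]

lemma add'_inf_left (X : AGame) : add' .inf X = .inf := by rw [add']
lemma add'_inf_right (X : AGame) : add' X .inf = .inf := by cases X <;> simp [add']
lemma add'_binf_binf : add' .binf .binf = .binf := by simp [add']
lemma add'_binf_node (L R : List AGame) : add' .binf (.node L R) = .binf := by simp [add']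
lemma add'_node_binf (L R : List AGame) : add' (.node L R) .binf = .binf := by simp [add']
lemma add'_node_node (L R L' R' : List AGame) :
    add' (.node L R) (.node L' R') =
      .node ((L.map fun x => add' x (.node L' R')) ++ (L'.map fun y => add' (.node L R) y))
            ((R.map fun x => add' x (.node L' R')) ++ (R'.map fun y => add' (.node L R) y)) := by
  rw [add']; simp [List.attach_map_val]

lemma any_congr {l : List AGame} {p q : AGame → Bool} (h : ∀ a ∈ l, p a = q a) :
    l.any p = l.any q := by
  induction l with
  | nil => rfl
  | cons a t ih =>
    simp only [List.any_cons, h a (by simp), ih fun x hx => h x (by simp [hx])]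

lemma all_congr {l : List AGame} {p q : AGame → Bool} (h : ∀ a ∈ l, p a = q a) :
    l.all p = l.all q := by
  induction l with
  | nil => rfl
  | cons a t ih =>
    simp only [List.all_cons, h a (by simp), ih fun x hx => h x (by simp [hx])]

lemma sizeOf_mem_left {a : AGame} {L R : List AGame} (h : a ∈ L) :
    sizeOf a < sizeOf (AGame.node L R) := by
  have := List.sizeOf_lt_of_mem h
  simp only [node.sizeOf_spec]; omega

lemma sizeOf_mem_right {a : AGame} {L R : List AGame} (h : a ∈ R) :
    sizeOf a < sizeOf (AGame.node L R) := by
  have := List.sizeOf_lt_of_mem h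
  simp only [node.sizeOf_spec]; omega

lemma add'_assoc : ∀ (A B C : AGame), add' (add' A B) C = add' A (add' B C) := by
  have key : ∀ n, ∀ A B C : AGame, sizeOf A + sizeOf B + sizeOf C < n →
      add' (add' A B) C = add' A (add' B C) := by
    intro n
    induction n with
    | zero => intro A B C h; omega
    | succ n ih =>
      intro A B C h
      cases A with
      | inf => simp [add'_inf_left]
      | binf =>
        cases B with
        | inf => simp [add'_inf_left, add'_inf_right]
        | binf =>
          cases C <;> simp [add'_inf_left, add'_inf_right, add'_binf_binf, add'_binf_node]
        | node Lb Rb =>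
          cases C <;> simp [add'_inf_left, add'_inf_right, add'_binf_binf, add'_binf_node,
            add'_node_binf, add'_node_node]
      | node La Ra =>
        cases B with
        | inf => simp [add'_inf_left, add'_inf_right]
        | binf =>
          cases C <;> simp [add'_inf_left, add'_inf_right, add'_binf_binf, add'_binf_node,
            add'_node_binf, add'_node_node]
        | node Lb Rb =>
          cases C with
          | inf => simp [add'_inf_right]
          | binf => simp [add'_node_binf, add'_node_node]
          | node Lc Rc =>
            have hsA : ∀ a, a ∈ La ∨ a ∈ Ra →
                add' (add' a (node Lb Rb)) (node Lc Rc) =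
                  add' a (add' (node Lb Rb) (node Lc Rc)) := by
              intro a ha
              apply ih
              rcases ha with ha | ha
              · have := sizeOf_mem_left (R := Ra) ha; omega
              · have := sizeOf_mem_right (L := La) ha; omega
            have hsB : ∀ b, b ∈ Lb ∨ b ∈ Rb →
                add' (add' (node La Ra) b) (node Lc Rc) =
                  add' (node La Ra) (add' b (node Lc Rc)) := by
              intro b hb
              apply ih
              rcases hb with hb | hb
              · have := sizeOf_mem_left (R := Rb) hb; omega
              · have := sizeOf_mem_right (L := Lb) hb; omega
            have hsC : ∀ c, c ∈ Lc ∨ c ∈ Rc →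
                add' (add' (node La Ra) (node Lb Rb)) c =
                  add' (node La Ra) (add' (node Lb Rb) c) := by
              intro c hc
              apply ih
              rcases hc with hc | hc
              · have := sizeOf_mem_left (R := Rc) hc; omega
              · have := sizeOf_mem_right (L := Lc) hc; omega
            conv_lhs => rw [add'_node_node La Ra Lb Rb]
            rw [add'_node_node, add'_node_node Lb Rb Lc Rc, add'_node_node]
            simp only [List.map_append, List.map_map, List.append_assoc]
            congr 1
            · congr 1
              · exact List.map_congr_left fun a ha => by
                  simp only [Function.comp_apply]
                  rw [← add'_node_node Lb Rb Lc Rc]; exact hsA a (Or.inl ha)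
              congr 1
              · exact List.map_congr_left fun b hb => by
                  simp only [Function.comp_apply]; exact hsB b (Or.inl hb)
              · exact List.map_congr_left fun c hc => by
                  simp only [Function.comp_apply]
                  rw [← add'_node_node La Ra Lb Rb]; exact hsC c (Or.inl hc)
            · congr 1
              · exact List.map_congr_left fun a ha => by
                  simp only [Function.comp_apply]
                  rw [← add'_node_node Lb Rb Lc Rc]; exact hsA a (Or.inr ha)
              congr 1
              · exact List.map_congr_left fun b hb => by
                  simp only [Function.comp_apply]; exact hsB b (Or.inr hb)
              · exact List.map_congr_left fun c hc => by
                  simp only [Function.comp_apply]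
                  rw [← add'_node_node La Ra Lb Rb]; exact hsC c (Or.inr hc)
  intro A B C; exact key (sizeOf A + sizeOf B + sizeOf C + 1) A B C (by omega)

lemma lf_add3 (La Ra Lb Rb Lc Rc : List AGame) :
    lf (add' (.node La Ra) (add' (.node Lb Rb) (.node Lc Rc))) =
      ((La.any fun a => ls (add' a (add' (.node Lb Rb) (.node Lc Rc)))) ||
       (Lb.any fun b => ls (add' (.node La Ra) (add' b (.node Lc Rc)))) ||
       (Lc.any fun c => ls (add' (.node La Ra) (add' (.node Lb Rb) c)))) := by
  conv_lhs => rw [add'_node_node Lb Rb Lc Rc, add'_node_node La Ra]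
  simp only [lf_node, List.any_append, List.any_map, Function.comp_def]
  simp only [← add'_node_node Lb Rb Lc Rc]
  rw [Bool.or_assoc]

lemma ls_add3 (La Ra Lb Rb Lc Rc : List AGame) :
    ls (add' (.node La Ra) (add' (.node Lb Rb) (.node Lc Rc))) =
      ((Ra.all fun a => lf (add' a (add' (.node Lb Rb) (.node Lc Rc)))) &&
       (Rb.all fun b => lf (add' (.node La Ra) (add' b (.node Lc Rc)))) &&
       (Rc.all fun c => lf (add' (.node La Ra) (add' (.node Lb Rb) c)))) := by
  conv_lhs => rw [add'_node_node Lb Rb Lc Rc, add'_node_node La Ra]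
  simp only [ls_node, List.all_append, List.all_map, Function.comp_def]
  simp only [← add'_node_node Lb Rb Lc Rc]
  rw [Bool.and_assoc]

lemma add'_swap : ∀ (A B C : AGame),
    lf (add' A (add' B C)) = lf (add' B (add' A C)) ∧
    ls (add' A (add' B C)) = ls (add' B (add' A C)) := by
  have key : ∀ n, ∀ A B C : AGame, sizeOf A + sizeOf B + sizeOf C < n →
      lf (add' A (add' B C)) = lf (add' B (add' A C)) ∧
      ls (add' A (add' B C)) = ls (add' B (add' A C)) := by
    intro n
    induction n with
    | zero => intro A B C h; omega
    | succ n ih =>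
      intro A B C h
      cases A with
      | inf => simp [add'_inf_left, add'_inf_right]
      | binf =>
        cases B with
        | inf => simp [add'_inf_left, add'_inf_right]
        | binf =>
          cases C <;>
            simp [add'_inf_left, add'_inf_right, add'_binf_binf, add'_binf_node]
        | node Lb Rb =>
          cases C <;>
            simp [add'_inf_left, add'_inf_right, add'_binf_binf, add'_binf_node,
              add'_node_binf, add'_node_node]
      | node La Ra =>
        cases B with
        | inf => simp [add'_inf_left, add'_inf_right]
        | binf =>
          cases C <;>
            simp [add'_inf_left, add'_inf_right, add'_binf_binf, add'_binf_node,
              add'_node_binf, add'_node_node]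
        | node Lb Rb =>
          cases C with
          | inf => simp [add'_inf_left, add'_inf_right]
          | binf => simp [add'_node_binf, add'_node_node, add'_binf_node]
          | node Lc Rc =>
            have ihA : ∀ a, a ∈ La ∨ a ∈ Ra →
                (lf (add' a (add' (node Lb Rb) (node Lc Rc))) =
                   lf (add' (node Lb Rb) (add' a (node Lc Rc))) ∧
                 ls (add' a (add' (node Lb Rb) (node Lc Rc))) =
                   ls (add' (node Lb Rb) (add' a (node Lc Rc)))) := by
              intro a ha
              apply ih
              rcases ha with ha | ha
              · have := sizeOf_mem_left (R := Ra) ha; omega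
              · have := sizeOf_mem_right (L := La) ha; omega
            have ihB : ∀ b, b ∈ Lb ∨ b ∈ Rb →
                (lf (add' (node La Ra) (add' b (node Lc Rc))) =
                   lf (add' b (add' (node La Ra) (node Lc Rc))) ∧
                 ls (add' (node La Ra) (add' b (node Lc Rc))) =
                   ls (add' b (add' (node La Ra) (node Lc Rc)))) := by
              intro b hb
              apply ih
              rcases hb with hb | hb
              · have := sizeOf_mem_left (R := Rb) hb; omega
              · have := sizeOf_mem_right (L := Lb) hb; omega
            have ihC : ∀ c, c ∈ Lc ∨ c ∈ Rc →
                (lf (add' (node La Ra) (add' (node Lb Rb) c)) =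
                   lf (add' (node Lb Rb) (add' (node La Ra) c)) ∧
                 ls (add' (node La Ra) (add' (node Lb Rb) c)) =
                   ls (add' (node Lb Rb) (add' (node La Ra) c))) := by
              intro c hc
              apply ih
              rcases hc with hc | hc
              · have := sizeOf_mem_left (R := Rc) hc; omega
              · have := sizeOf_mem_right (L := Lc) hc; omega
            constructor
            · rw [lf_add3 La Ra Lb Rb Lc Rc, lf_add3 Lb Rb La Ra Lc Rc]
              rw [any_congr (l := La) (fun a ha => (ihA a (Or.inl ha)).2),
                any_congr (l := Lb) (fun b hb => ((ihB b (Or.inl hb)).2).symm),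
                any_congr (l := Lc) (fun c hc => (ihC c (Or.inl hc)).2)]
              ac_rfl
            · rw [ls_add3 La Ra Lb Rb Lc Rc, ls_add3 Lb Rb La Ra Lc Rc]
              rw [all_congr (l := Ra) (fun a ha => (ihA a (Or.inr ha)).1),
                all_congr (l := Rb) (fun b hb => ((ihB b (Or.inr hb)).1).symm),
                all_congr (l := Rc) (fun c hc => (ihC c (Or.inr hc)).1)]
              ac_rfl
  intro A B C; exact key (sizeOf A + sizeOf B + sizeOf C + 1) A B C (by omega)

lemma zero_add_outcome : ∀ Y : AGame, lf (add' zero Y) = lf Y ∧ ls (add' zero Y) = ls Y := by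
  have key : ∀ n, ∀ Y : AGame, sizeOf Y < n →
      lf (add' zero Y) = lf Y ∧ ls (add' zero Y) = ls Y := by
    intro n
    induction n with
    | zero => intro Y h; omega
    | succ n ih =>
      intro Y h
      cases Y with
      | inf => simp [zero, add'_inf_right]
      | binf => simp [zero, add'_node_binf]
      | node L R =>
        have ihL : ∀ y ∈ L, ls (add' zero y) = ls y := by
          intro y hy
          exact (ih y (by have := sizeOf_mem_left (R := R) hy; omega)).2
        have ihR : ∀ y ∈ R, lf (add' zero y) = lf y := by
          intro y hy
          exact (ih y (by have := sizeOf_mem_right (L := L) hy; omega)).1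
        rw [zero, add'_node_node]
        simp only [lf_node, ls_node, List.any_append, List.all_append, List.any_map,
          List.all_map, List.map_cons, List.map_nil, List.any_cons, List.any_nil,
          List.all_cons, List.all_nil, Function.comp_def]
        rw [show (AGame.node [AGame.binf] [AGame.inf]) = zero from rfl]
        simp only [add'_binf_node, add'_inf_left, ls_binf, lf_inf,
          any_congr (l := L) ihL, all_congr (l := R) ihR]
        constructor
        · simp [lf_node]
        · simp [ls_node]
  intro Y; exact key (sizeOf Y + 1) Y (by omega)

lemma valid_add' : ∀ A B : AGame, Valid A → Valid B → Valid (add' A B) := by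
  have key : ∀ n, ∀ A B : AGame, sizeOf A + sizeOf B < n →
      Valid A → Valid B → Valid (add' A B) := by
    intro n
    induction n with
    | zero => intro A B h; omega
    | succ n ih =>
      intro A B h hA hB
      cases A with
      | inf => simpa [add'_inf_left] using Valid.inf
      | binf =>
        cases B with
        | inf => simpa [add'_inf_right] using Valid.inf
        | binf => simpa [add'_binf_binf] using Valid.binf
        | node L R => simpa [add'_binf_node] using Valid.binf
      | node La Ra =>
        cases B with
        | inf => simpa [add'_inf_right] using Valid.inf
        | binf => simpa [add'_node_binf] using Valid.binf
        | node Lb Rb =>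
          rw [add'_node_node]
          cases hA with
          | node hLa0 hRa0 hLav hRav =>
            cases hB with
            | node hLb0 hRb0 hLbv hRbv =>
              apply Valid.node
              · simp [hLa0]
              · simp [hRa0]
              · intro g hg
                rcases List.mem_append.1 hg with hg | hg
                · obtain ⟨a, ha, rfl⟩ := List.mem_map.1 hg
                  exact ih _ _ (by have := sizeOf_mem_left (R := Ra) ha; omega)
                    (hLav a ha) (Valid.node hLb0 hRb0 hLbv hRbv)
                · obtain ⟨b, hb, rfl⟩ := List.mem_map.1 hg
                  exact ih _ _ (by have := sizeOf_mem_left (R := Rb) hb; omega)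
                    (Valid.node hLa0 hRa0 hLav hRav) (hLbv b hb)
              · intro g hg
                rcases List.mem_append.1 hg with hg | hg
                · obtain ⟨a, ha, rfl⟩ := List.mem_map.1 hg
                  exact ih _ _ (by have := sizeOf_mem_right (L := La) ha; omega)
                    (hRav a ha) (Valid.node hLb0 hRb0 hLbv hRbv)
                · obtain ⟨b, hb, rfl⟩ := List.mem_map.1 hg
                  exact ih _ _ (by have := sizeOf_mem_right (L := Lb) hb; omega)
                    (Valid.node hLa0 hRa0 hLav hRav) (hRbv b hb)
  intro A B; exact key (sizeOf A + sizeOf B + 1) A B (by omega)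

lemma valid_zero : Valid zero :=
  Valid.node (by simp) (by simp)
    (by rintro g hg; simp at hg; subst hg; exact Valid.binf)
    (by rintro g hg; simp at hg; subst hg; exact Valid.inf)

lemma outcome_zero : outcome zero = (false, true) := by
  simp [outcome, zero, lf_node, ls_node, lf_inf, ls_binf]

lemma outcome_inf : outcome inf = (true, true) := by simp [outcome, lf_inf, ls_inf]
lemma outcome_binf : outcome binf = (false, false) := by simp [outcome, lf_binf, ls_binf]

lemma not_ge_binf_zero : ¬ GE .binf zero := by
  intro hge
  have := hge zero valid_zero (by simp [zero]) (by simp [zero])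
  rw [show add' AGame.binf zero = AGame.binf from by rw [zero]; exact add'_binf_node _ _] at this
  have h2 : ls (add' zero zero) = ls zero := (zero_add_outcome zero).2
  have h3 : ls zero = true := by simp [zero, ls_node, lf_inf]
  have := this.2
  simp [outcome, ls_binf, h2, h3] at this

lemma not_equiv_inf_zero : ¬ Equiv .inf zero := by
  intro he
  have := he zero valid_zero (by simp [zero]) (by simp [zero])
  rw [add'_inf_left] at this
  have h1 : lf (add' zero zero) = lf zero := (zero_add_outcome zero).1
  have h3 : lf zero = false := by simp [zero, lf_node, ls_binf]
  simp [outcome, lf_inf, h1, h3] at this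

lemma outLE_trans {a b c : Bool × Bool} (h1 : OutLE a b) (h2 : OutLE b c) : OutLE a c :=
  ⟨fun h => h2.1 (h1.1 h), fun h => h2.2 (h1.2 h)⟩

lemma outLE_antisymm {a b : Bool × Bool} (h1 : OutLE a b) (h2 : OutLE b a) : a = b := by
  obtain ⟨a1, a2⟩ := a; obtain ⟨b1, b2⟩ := b
  obtain ⟨p1, p2⟩ := h1; obtain ⟨q1, q2⟩ := h2
  simp only [Prod.mk.injEq]
  constructor
  · cases a1 <;> cases b1 <;> simp_all
  · cases a2 <;> cases b2 <;> simp_all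

lemma outLE_top {a : Bool × Bool} : OutLE a (true, true) := ⟨fun _ => rfl, fun _ => rfl⟩

lemma ne_binf_of_ge_zero {H : AGame} (h : GE H zero) : H ≠ .binf := by
  rintro rfl; exact not_ge_binf_zero h

lemma outcome_zero_add (Y : AGame) : outcome (add' zero Y) = outcome Y := by
  unfold outcome
  rw [(zero_add_outcome Y).1, (zero_add_outcome Y).2]

lemma outcome_swap (A B C : AGame) :
    outcome (add' A (add' B C)) = outcome (add' B (add' A C))  := by
  unfold outcome
  rw [(add'_swap A B C).1, (add'_swap A B C).2]

theorem add_pos' (G H : AGame) (hG : Valid G) (hH : Valid H)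
    (hG0 : GE G zero) (hG0' : ¬ Equiv G zero) (hH0 : GE H zero) :
    GE (add' G H) zero ∧ ¬ Equiv (add' G H) zero := by
  have hGb := ne_binf_of_ge_zero hG0
  have hHb := ne_binf_of_ge_zero hH0
  have infGE : GE AGame.inf zero := by
    intro X hX hXi hXb
    rw [add'_inf_left, outcome_inf]
    exact outLE_top
  cases G with
  | binf => exact absurd rfl hGb
  | inf =>
    rw [add'_inf_left]
    exact ⟨infGE, not_equiv_inf_zero⟩
  | node LG RG =>
    cases H with
    | binf => exact absurd rfl hHb
    | inf =>
      rw [add'_inf_right]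
      exact ⟨infGE, not_equiv_inf_zero⟩
    | node LH RH =>
      constructor
      · intro X hX hXi hXb
        cases X with
        | inf => exact absurd rfl hXi
        | binf => exact absurd rfl hXb
        | node LX RX =>
          have h1 := hH0 (node LX RX) hX hXi hXb
          have hYi : add' (node LH RH) (node LX RX) ≠ AGame.inf := by
            rw [add'_node_node]; simp
          have hYb : add' (node LH RH) (node LX RX) ≠ AGame.binf := by
            rw [add'_node_node]; simp
          have hYv := valid_add' (node LH RH) (node LX RX) hH hX
          have h2 := hG0 _ hYv hYi hYb
          rw [outcome_zero_add, ← add'_assoc] at h2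
          exact outLE_trans h1 h2
      · intro hEq
        apply hG0'
        intro X hX hXi hXb
        cases X with
        | inf => exact absurd rfl hXi
        | binf => exact absurd rfl hXb
        | node LX RX =>
          have hle := hG0 (node LX RX) hX hXi hXb
          have hZi : add' (node LG RG) (node LX RX) ≠ AGame.inf := by
            rw [add'_node_node]; simp
          have hZb : add' (node LG RG) (node LX RX) ≠ AGame.binf := by
            rw [add'_node_node]; simp
          have hZv := valid_add' (node LG RG) (node LX RX) hG hX
          have hge := hH0 _ hZv hZi hZb
          rw [outcome_zero_add] at hge
          rw [outcome_swap (node LH RH) (node LG RG) (node LX RX)] at hge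
          rw [← add'_assoc] at hge
          rw [hEq (node LX RX) hX hXi hXb] at hge
          exact outLE_antisymm hge hle

end AGame

namespace AGame
/-- If `G > 0` and `H ≥ 0` then `G + H > 0`. -/
theorem add_pos (G H : AGame) (hG : Valid G) (hH : Valid H)
    (hG0 : GE G zero) (hG0' : ¬ Equiv G zero) (hH0 : GE H zero) :
    GE (add' G H) zero ∧ ¬ Equiv (add' G H) zero := by
  exact add_pos' G H hG hH hG0 hG0' hH0
end AGame
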